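/- For every integer m ≥ 1, the joint density J_m is continuous at every point of the domain D_m = {(t₀, …, t_m) : t_j > 0 for all j, Σ_{j=0}^{m−1} t_j < Δ, t_m < τ} that lies on none of the m+1 hyperplanes {Σ_{j=i+1}^{m} t_j = Δ}, i = −1, 0, …, m−1. -/

import Mathlib

open Real Set Filter MeasureTheory

open Topology

/-- Conditional ISI density `F t s` given time-to-live `s` of the feedback impulse. -/
noncomputable def F (lam τ t s : ℝ) : ℝ :=
  if 0 < t ∧ t < s then lam ^ 2 * t * Real.exp (-lam * t)
  else if s ≤ t ∧ t ≤ s + τ then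
    (1 + lam * s) * Real.exp (-lam * s) * (lam ^ 2 * (t - s) * Real.exp (-lam * (t - s)))
  else 0

/-- Regular part of the stationary time-to-live density. -/
noncomputable def g (lam A B s : ℝ) : ℝ := A + B * Real.exp (2 * lam * s)

/-- Weight of the singular (Dirac) part of the stationary time-to-live distribution. -/
noncomputable def aC (lam Δ : ℝ) : ℝ :=
  4 * Real.exp (2 * lam * Δ) / ((3 + 2 * lam * Δ) * Real.exp (2 * lam * Δ) + 1)

/-- `T t p q = Σ_{j=p}^{q-1} t_j` (empty sums are `0`). -/
def T {n : ℕ} (t : Fin n → ℝ) (p q : ℕ) : ℝ :=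
  ∑ j : Fin n, if p ≤ (j : ℕ) ∧ (j : ℕ) < q then t j else 0

/-- `Ilow lam Δ τ A B i t` is the term `I_i`, `0 ≤ i ≤ m-1`, of the joint ISI density. -/
noncomputable def Ilow (lam Δ τ A B : ℝ) {m : ℕ} (i : ℕ) (t : Fin (m + 1) → ℝ) : ℝ :=
  (∏ k : Fin (m + 1), if i + 1 ≤ (k : ℕ) then F lam τ (t k) (Δ - T t (i + 1) (k : ℕ)) else 1) *
    ∫ s in T t 0 i..T t 0 (i + 1),
      g lam A B s *
        ∏ k : Fin (m + 1), if (k : ℕ) ≤ i then F lam τ (t k) (s - T t 0 (k : ℕ)) else 1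

/-- `Itop lam Δ τ A B t` is the term `I_m` of the joint ISI density. -/
noncomputable def Itop (lam Δ τ A B : ℝ) {m : ℕ} (t : Fin (m + 1) → ℝ) : ℝ :=
  (∫ s in T t 0 m..Δ, g lam A B s * ∏ k : Fin (m + 1), F lam τ (t k) (s - T t 0 (k : ℕ)))
    + aC lam Δ * ∏ k : Fin (m + 1), F lam τ (t k) (Δ - T t 0 (k : ℕ))

/-- `J lam Δ τ A B t = Σ_{i=0}^{m} I_i(t)`, the joint density of `m+1` consecutive ISIs. -/
noncomputable def J (lam Δ τ A B : ℝ) {m : ℕ} (t : Fin (m + 1) → ℝ) : ℝ :=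
  (∑ i ∈ Finset.range m, Ilow lam Δ τ A B i t) + Itop lam Δ τ A B t

/-! ### Auxiliary lemmas -/

lemma continuous_T {n : ℕ} (p q : ℕ) : Continuous fun t : Fin n → ℝ => T t p q := by
  unfold T
  exact continuous_finset_sum _ fun j _ => by
    by_cases h : p ≤ (j : ℕ) ∧ (j : ℕ) < q <;>
      simp only [h, if_true, if_false] <;> exact (by first | exact continuous_apply j | exact continuous_const)

lemma T_nonneg {n : ℕ} {t : Fin n → ℝ} (hpos : ∀ j, 0 < t j) (p q : ℕ) : 0 ≤ T t p q :=
  Finset.sum_nonneg fun j _ => by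
    by_cases h : p ≤ (j : ℕ) ∧ (j : ℕ) < q <;> simp [h, (hpos j).le]

lemma T_mono {n : ℕ} {t : Fin n → ℝ} (hpos : ∀ j, 0 < t j) {p p' q q' : ℕ}
    (hp : p' ≤ p) (hq : q ≤ q') : T t p q ≤ T t p' q' :=
  Finset.sum_le_sum fun j _ => by
    by_cases h : p ≤ (j : ℕ) ∧ (j : ℕ) < q
    · rw [if_pos h, if_pos ⟨hp.trans h.1, h.2.trans_le hq⟩]
    · by_cases h' : p' ≤ (j : ℕ) ∧ (j : ℕ) < q' <;> simp [h, h', (hpos j).le]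

lemma T_succ {n : ℕ} (t : Fin n → ℝ) {p k : ℕ} (hk : k < n) (hpk : p ≤ k) :
    T t p (k + 1) = T t p k + t ⟨k, hk⟩ := by
  unfold T
  have : ∀ j : Fin n, (if p ≤ (j : ℕ) ∧ (j : ℕ) < k + 1 then t j else 0)
      = (if p ≤ (j : ℕ) ∧ (j : ℕ) < k then t j else 0) + (if (j : ℕ) = k then t j else 0) := by
    intro j
    by_cases h1 : p ≤ (j : ℕ) ∧ (j : ℕ) < k + 1
    · by_cases h2 : (j : ℕ) = k
      · rw [if_pos h1, if_pos h2, if_neg (by omega), zero_add]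
      · rw [if_pos h1, if_pos ⟨h1.1, by omega⟩, if_neg h2, add_zero]
    · rw [if_neg h1, if_neg (by omega), if_neg (by omega), add_zero]
  rw [Finset.sum_congr rfl fun j _ => this j, Finset.sum_add_distrib]
  congr 1
  rw [Finset.sum_eq_single (⟨k, hk⟩ : Fin n)]
  · simp
  · intro b _ hb
    rw [if_neg (by simpa [Fin.ext_iff] using hb)]
  · simp

lemma F_continuousAt {lam τ : ℝ} (hτ : 0 < τ) {t s : ℝ} (ht : 0 < t) (h1 : t ≠ s)
    (h2 : t ≠ s + τ) : ContinuousAt (fun p : ℝ × ℝ => F lam τ p.1 p.2) (t, s) := by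
  rcases lt_or_gt_of_ne h1 with hlt | hgt
  · have hopen : IsOpen {p : ℝ × ℝ | 0 < p.1 ∧ p.1 < p.2} :=
      (isOpen_lt continuous_const continuous_fst).inter (isOpen_lt continuous_fst continuous_snd)
    have hmem : (t, s) ∈ {p : ℝ × ℝ | 0 < p.1 ∧ p.1 < p.2} := ⟨ht, hlt⟩
    have heq : (fun p : ℝ × ℝ => F lam τ p.1 p.2)
        =ᶠ[nhds (t, s)] fun p => lam ^ 2 * p.1 * Real.exp (-lam * p.1) :=
      eventually_of_mem (hopen.mem_nhds hmem) fun p hp => by simp [F, hp.1, hp.2]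
    refine ContinuousAt.congr ?_ heq.symm
    fun_prop
  · rcases lt_or_gt_of_ne h2 with hlt2 | hgt2
    · have hopen : IsOpen {p : ℝ × ℝ | p.2 < p.1 ∧ p.1 < p.2 + τ} :=
        (isOpen_lt continuous_snd continuous_fst).inter
          (isOpen_lt continuous_fst (continuous_snd.add continuous_const))
      have hmem : (t, s) ∈ {p : ℝ × ℝ | p.2 < p.1 ∧ p.1 < p.2 + τ} := ⟨hgt, hlt2⟩
      have heq : (fun p : ℝ × ℝ => F lam τ p.1 p.2) =ᶠ[nhds (t, s)] fun p =>
          (1 + lam * p.2) * Real.exp (-lam * p.2) *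
            (lam ^ 2 * (p.1 - p.2) * Real.exp (-lam * (p.1 - p.2))) :=
        eventually_of_mem (hopen.mem_nhds hmem) fun p hp => by
          have h1' : ¬(0 < p.1 ∧ p.1 < p.2) := fun h => absurd hp.1 (not_lt.2 h.2.le)
          simp [F, h1', hp.1.le, hp.2.le]
      refine ContinuousAt.congr ?_ heq.symm
      fun_prop
    · have hopen : IsOpen {p : ℝ × ℝ | p.2 + τ < p.1} :=
        isOpen_lt (continuous_snd.add continuous_const) continuous_fst
      have hmem : (t, s) ∈ {p : ℝ × ℝ | p.2 + τ < p.1} := hgt2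
      have heq : (fun p : ℝ × ℝ => F lam τ p.1 p.2) =ᶠ[nhds (t, s)] fun _ => (0 : ℝ) :=
        eventually_of_mem (hopen.mem_nhds hmem) fun p hp => by
          have hsp : p.2 < p.1 := lt_of_le_of_lt (le_add_of_nonneg_right hτ.le) hp
          have h1' : ¬(0 < p.1 ∧ p.1 < p.2) := fun h => absurd hsp (not_lt.2 h.2.le)
          have h2' : ¬(p.2 ≤ p.1 ∧ p.1 ≤ p.2 + τ) := fun h => absurd hp (not_lt.2 h.2)
          simp [F, h1', h2']
      exact ContinuousAt.congr continuousAt_const heq.symm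

lemma F_measurable {lam τ t d : ℝ} : Measurable fun s : ℝ => F lam τ t (s - d) := by
  unfold F
  refine Measurable.ite ?_ measurable_const
    (Measurable.ite ?_ (Continuous.measurable (by fun_prop)) measurable_const)
  · by_cases h : 0 < t
    · simpa [h] using measurableSet_lt measurable_const (measurable_id.sub_const d)
    · simp [h]
  · have : {s : ℝ | s - d ≤ t ∧ t ≤ s - d + τ} = {s | s - d ≤ t} ∩ {s | t ≤ s - d + τ} := rfl
    rw [this]
    exact (measurableSet_le (measurable_id.sub_const d) measurable_const).inter
      (measurableSet_le measurable_const ((measurable_id.sub_const d).add_const τ))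

lemma F_bound {lam τ Δ : ℝ} (hlam : 0 < lam) (hΔ : 0 < Δ) (hτ : 0 < τ) {t s : ℝ}
    (hs : s ∈ Set.Icc (-(Δ + 3)) (Δ + 2)) :
    |F lam τ t s| ≤ lam ^ 2 * (Δ + 2) + (1 + lam * (Δ + 3)) * Real.exp (lam * (Δ + 3)) * (lam ^ 2 * τ) := by
  have hB2 : (0:ℝ) ≤ (1 + lam * (Δ + 3)) * Real.exp (lam * (Δ + 3)) * (lam ^ 2 * τ) := by
    have := Real.exp_pos (lam * (Δ + 3))
    positivity
  have hB1 : (0:ℝ) ≤ lam ^ 2 * (Δ + 2) := by positivity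
  unfold F
  split_ifs with h1 h2
  · rw [abs_of_nonneg (mul_nonneg (mul_nonneg (by positivity) h1.1.le) (Real.exp_pos _).le)]
    have he : Real.exp (-lam * t) ≤ 1 := Real.exp_le_one_iff.mpr (by nlinarith [h1.1])
    have ht2 : t ≤ Δ + 2 := h1.2.le.trans hs.2
    have e1 : lam ^ 2 * t * Real.exp (-lam * t) ≤ lam ^ 2 * t * 1 :=
      mul_le_mul_of_nonneg_left he (mul_nonneg (pow_nonneg hlam.le 2) h1.1.le)
    have e2 : lam ^ 2 * t ≤ lam ^ 2 * (Δ + 2) :=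
      mul_le_mul_of_nonneg_left ht2 (pow_nonneg hlam.le 2)
    linarith
  · rw [abs_mul, abs_mul]
    have hsabs : |s| ≤ Δ + 3 := abs_le.mpr ⟨hs.1, hs.2.trans (by linarith)⟩
    have hA : |1 + lam * s| ≤ 1 + lam * (Δ + 3) := by
      calc |1 + lam * s| ≤ |(1:ℝ)| + |lam * s| := abs_add_le _ _
        _ = 1 + lam * |s| := by rw [abs_one, abs_mul, abs_of_pos hlam]
        _ ≤ 1 + lam * (Δ + 3) := by nlinarith
    have hE : |Real.exp (-lam * s)| ≤ Real.exp (lam * (Δ + 3)) := by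
      rw [abs_of_pos (Real.exp_pos _)]
      exact Real.exp_le_exp.mpr (by nlinarith [hs.1])
    have hC : |lam ^ 2 * (t - s) * Real.exp (-lam * (t - s))| ≤ lam ^ 2 * τ := by
      have hts0 : 0 ≤ t - s := by linarith [h2.1]
      have hts : t - s ≤ τ := by linarith [h2.2]
      rw [abs_of_nonneg (by positivity)]
      have he : Real.exp (-lam * (t - s)) ≤ 1 := Real.exp_le_one_iff.mpr (by nlinarith)
      have e1 : lam ^ 2 * (t - s) * Real.exp (-lam * (t - s)) ≤ lam ^ 2 * (t - s) * 1 :=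
        mul_le_mul_of_nonneg_left he (mul_nonneg (pow_nonneg hlam.le 2) hts0)
      have e2 : lam ^ 2 * (t - s) ≤ lam ^ 2 * τ :=
        mul_le_mul_of_nonneg_left hts (pow_nonneg hlam.le 2)
      linarith
    calc |1 + lam * s| * |Real.exp (-lam * s)| * |lam ^ 2 * (t - s) * Real.exp (-lam * (t - s))|
        ≤ (1 + lam * (Δ + 3)) * Real.exp (lam * (Δ + 3)) * (lam ^ 2 * τ) := by
          apply mul_le_mul (mul_le_mul hA hE (abs_nonneg _) (by positivity)) hC (abs_nonneg _)
            (by positivity)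
      _ ≤ _ := le_add_of_nonneg_left hB1
  · simpa using add_nonneg hB1 hB2

lemma key {X : Type*} [TopologicalSpace X] [FirstCountableTopology X]
    {f : X → ℝ → ℝ} {x₀ : X} {a b : X → ℝ} {C L U : ℝ}
    (hmeas : ∀ x, Measurable (f x))
    (hbound : ∀ᶠ x in 𝓝 x₀, ∀ s ∈ Set.Icc L U, |f x s| ≤ C)
    (ha : ContinuousAt a x₀) (hb : ContinuousAt b x₀)
    (haI : a x₀ ∈ Set.Ioo L U) (hbI : b x₀ ∈ Set.Ioo L U)
    (hcont : ∀ᵐ s : ℝ, ContinuousAt (fun x => f x s) x₀) :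
    ContinuousAt (fun x => ∫ s in a x..b x, f x s) x₀ := by
  have hLU : L ≤ U := (haI.1.trans haI.2).le
  have hint : ∀ x, (∀ s ∈ Set.Icc L U, |f x s| ≤ C) → ∀ u v, u ∈ Set.Icc L U →
      v ∈ Set.Icc L U → IntervalIntegrable (f x) volume u v := by
    intro x hx u v hu hv
    apply MeasureTheory.IntegrableOn.intervalIntegrable
    have hconst : IntegrableOn (fun _ : ℝ => C) (Set.uIcc u v) volume :=
      integrableOn_const isCompact_uIcc.measure_lt_top.ne
    refine hconst.mono' ((hmeas x).aestronglyMeasurable.restrict) ?_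
    filter_upwards [ae_restrict_mem measurableSet_uIcc] with s hs
    simpa [Real.norm_eq_abs] using hx s (Set.uIcc_subset_Icc hu hv hs)
  have haev : ∀ᶠ x in 𝓝 x₀, a x ∈ Set.Icc L U :=
    (ha.eventually_mem (Ioo_mem_nhds haI.1 haI.2)).mono fun x hx => Ioo_subset_Icc_self hx
  have hbev : ∀ᶠ x in 𝓝 x₀, b x ∈ Set.Icc L U :=
    (hb.eventually_mem (Ioo_mem_nhds hbI.1 hbI.2)).mono fun x hx => Ioo_subset_Icc_self hx
  have ha0 : a x₀ ∈ Set.Icc L U := Ioo_subset_Icc_self haI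
  have hb0 : b x₀ ∈ Set.Icc L U := Ioo_subset_Icc_self hbI
  have hdecomp : ∀ᶠ x in 𝓝 x₀, (∫ s in a x..b x, f x s) =
      (∫ s in a x..a x₀, f x s) + (∫ s in a x₀..b x₀, f x s) + (∫ s in b x₀..b x, f x s) := by
    filter_upwards [hbound, haev, hbev] with x hx hax hbx
    rw [intervalIntegral.integral_add_adjacent_intervals (hint x hx _ _ hax ha0)
      (hint x hx _ _ ha0 hb0),
      intervalIntegral.integral_add_adjacent_intervals (hint x hx _ _ hax hb0)
      (hint x hx _ _ hb0 hbx)]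
  have hmid : ContinuousAt (fun x => ∫ s in a x₀..b x₀, f x s) x₀ := by
    apply intervalIntegral.continuousAt_of_dominated_interval
      (bound := fun _ => C) (Eventually.of_forall fun x => (hmeas x).aestronglyMeasurable.restrict)
    · filter_upwards [hbound] with x hx
      filter_upwards [] with s hs
      simpa [Real.norm_eq_abs] using hx s (Set.uIcc_subset_Icc ha0 hb0 (uIoc_subset_uIcc hs))
    · exact intervalIntegrable_const
    · filter_upwards [hcont] with s hs _; exact hs
  have htail : ∀ (c : X → ℝ), ContinuousAt c x₀ → (∀ᶠ x in 𝓝 x₀, c x ∈ Set.Icc L U) →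
      c x₀ ∈ Set.Icc L U →
      Tendsto (fun x => ∫ s in c x₀..c x, f x s) (𝓝 x₀) (𝓝 0) := by
    intro c hc hcev hc0
    refine squeeze_zero_norm' (a := fun x => C * |c x - c x₀|) ?_ ?_
    · filter_upwards [hbound, hcev] with x hx hcx
      apply intervalIntegral.norm_integral_le_of_norm_le_const
      intro s hs
      simpa [Real.norm_eq_abs] using hx s (Set.uIcc_subset_Icc hc0 hcx (uIoc_subset_uIcc hs))
    · have : Tendsto (fun x => C * |c x - c x₀|) (𝓝 x₀) (𝓝 (C * |c x₀ - c x₀|)) :=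
        (((hc.sub continuousAt_const).abs).const_mul C)
      simpa using this
  have hta := htail a ha haev ha0
  have htb := htail b hb hbev hb0
  have h1 : Tendsto (fun x => ∫ s in a x..a x₀, f x s) (𝓝 x₀) (𝓝 0) := by
    have := hta.neg
    rw [neg_zero] at this
    refine this.congr fun x => ?_
    rw [← intervalIntegral.integral_symm]
  have hfin : Tendsto (fun x => (∫ s in a x..a x₀, f x s) + (∫ s in a x₀..b x₀, f x s)
      + (∫ s in b x₀..b x, f x s)) (𝓝 x₀) (𝓝 (∫ s in a x₀..b x₀, f x₀ s)) := by
    simpa using (h1.add hmid).add htb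
  unfold ContinuousAt
  exact Tendsto.congr' (hdecomp.mono fun x hx => hx.symm) hfin

/-- for `m ≥ 1`, the joint density `J_m` is continuous at every point of
`D_m` lying on none of the `m+1` hyperplanes `Σ_{j=i+1}^{m} t_j = Δ`, `i = −1,…,m−1`. -/
theorem stmt11 (lam Δ τ A B : ℝ) (hlam : 0 < lam) (hΔ : 0 < Δ) (hΔτ : Δ < τ)
    (m : ℕ) (hm : 1 ≤ m) (t : Fin (m + 1) → ℝ)
    (ht : (∀ j, 0 < t j) ∧ T t 0 m < Δ ∧ t (Fin.last m) < τ)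
    (hne : ∀ p : ℕ, p ≤ m → T t p (m + 1) ≠ Δ) :
    ContinuousWithinAt (J lam Δ τ A B)
      {u : Fin (m + 1) → ℝ | (∀ j, 0 < u j) ∧ T u 0 m < Δ ∧ u (Fin.last m) < τ} t := by
  obtain ⟨hpos, hTm, hlast⟩ := ht
  have hτ : 0 < τ := hΔ.trans hΔτ
  apply ContinuousAt.continuousWithinAt
  set Cb := lam ^ 2 * (Δ + 2) + (1 + lam * (Δ + 3)) * Real.exp (lam * (Δ + 3)) * (lam ^ 2 * τ)
    with hCbdef
  set Cf := max Cb 1 with hCfdef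
  set Cg := |A| + |B| * Real.exp (2 * lam * (Δ + 1)) with hCgdef
  set C := Cg * Cf ^ (m + 1) with hCdef
  have hCf1 : (1 : ℝ) ≤ Cf := le_max_right _ _
  have hCbCf : Cb ≤ Cf := le_max_left _ _
  have hCg0 : 0 ≤ Cg := by rw [hCgdef]; positivity
  -- basic facts about T at t
  have hT0nn : ∀ p q : ℕ, 0 ≤ T t p q := fun p q => T_nonneg hpos p q
  have hTlt : ∀ p q : ℕ, q ≤ m → T t p q < Δ := fun p q hq =>
    lt_of_le_of_lt (T_mono hpos (Nat.zero_le p) hq) hTm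
  have hTm1 : T t 0 (m + 1) = T t 0 m + t (Fin.last m) := T_succ t (Nat.lt_succ_self m) (Nat.zero_le m)
  have hTm1lt : ∀ p : ℕ, T t p (m + 1) < Δ + τ := by
    intro p
    calc T t p (m + 1) ≤ T t 0 (m + 1) := T_mono hpos (Nat.zero_le p) le_rfl
      _ = T t 0 m + t (Fin.last m) := hTm1
      _ < Δ + τ := add_lt_add hTm hlast
  -- hyperplane avoidance facts
  have hkey : ∀ p : ℕ, p ≤ m → ∀ k : Fin (m + 1), p ≤ (k : ℕ) →
      t k ≠ Δ - T t p (k : ℕ) ∧ t k ≠ Δ - T t p (k : ℕ) + τ := by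
    intro p hp k hk
    have hsucc : T t p ((k : ℕ) + 1) = T t p (k : ℕ) + t k := by
      simpa using T_succ t k.isLt hk
    constructor
    · intro h
      have hΔeq : T t p ((k : ℕ) + 1) = Δ := by rw [hsucc, h]; ring
      rcases lt_or_eq_of_le (Nat.lt_succ_iff.mp k.isLt) with hkm | hkm
      · exact absurd hΔeq (ne_of_lt (hTlt p _ hkm))
      · exact hne p hp (by rwa [hkm] at hΔeq)
    · intro h
      have heq : T t p ((k : ℕ) + 1) = Δ + τ := by rw [hsucc, h]; ring
      rcases lt_or_eq_of_le (Nat.lt_succ_iff.mp k.isLt) with hkm | hkm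
      · have := hTlt p _ hkm
        linarith
      · have := hTm1lt p
        rw [hkm] at heq
        linarith
  -- composite continuity of a single F-factor
  have hFcomp : ∀ (c : ℝ) (p : ℕ) (k : Fin (m + 1)), t k ≠ c - T t p (k : ℕ) →
      t k ≠ c - T t p (k : ℕ) + τ →
      ContinuousAt (fun u : Fin (m + 1) → ℝ => F lam τ (u k) (c - T u p (k : ℕ))) t := by
    intro c p k h1 h2
    have hF := F_continuousAt (lam := lam) hτ (hpos k) h1 h2
    have hg : ContinuousAt (fun u : Fin (m + 1) → ℝ => (u k, c - T u p (k : ℕ))) t :=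
      ((continuous_apply k).continuousAt).prodMk
        ((continuous_const.sub (continuous_T p (k : ℕ))).continuousAt)
    have := ContinuousAt.comp (f := fun u : Fin (m + 1) → ℝ => (u k, c - T u p (k : ℕ)))
      (x := t) hF hg
    simpa [Function.comp_def] using this
  -- bound on g
  have hgb : ∀ s : ℝ, s ≤ Δ + 1 → |g lam A B s| ≤ Cg := by
    intro s hs
    unfold g
    have hexp : Real.exp (2 * lam * s) ≤ Real.exp (2 * lam * (Δ + 1)) :=
      Real.exp_le_exp.mpr (by nlinarith)
    calc |A + B * Real.exp (2 * lam * s)| ≤ |A| + |B| * Real.exp (2 * lam * s) := by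
          refine (abs_add_le _ _).trans ?_
          rw [abs_mul, abs_of_pos (Real.exp_pos _)]
      _ ≤ Cg := by
          rw [hCgdef]
          nlinarith [abs_nonneg B]
  -- eventual membership of all T x 0 k in a compact window
  have hVev : ∀ᶠ x : Fin (m + 1) → ℝ in 𝓝 t,
      ∀ k : Fin (m + 1), T x 0 (k : ℕ) ∈ Set.Icc (-1 : ℝ) (Δ + 2) := by
    rw [eventually_all]
    intro k
    have hk1 : T t 0 (k : ℕ) ∈ Set.Ioo (-1 : ℝ) (Δ + 2) :=
      ⟨by linarith [hT0nn 0 (k : ℕ)],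
       by have := hTlt 0 (k : ℕ) (Nat.lt_succ_iff.mp k.isLt); linarith⟩
    exact ((continuous_T 0 (k : ℕ)).continuousAt.eventually_mem
      (Ioo_mem_nhds hk1.1 hk1.2)).mono fun x hx => Ioo_subset_Icc_self hx
  -- bound on F-factors
  have hFb : ∀ x : Fin (m + 1) → ℝ, (∀ k : Fin (m + 1), T x 0 (k : ℕ) ∈ Set.Icc (-1 : ℝ) (Δ + 2)) →
      ∀ s ∈ Set.Icc (-1 : ℝ) (Δ + 1), ∀ k : Fin (m + 1),
      |F lam τ (x k) (s - T x 0 (k : ℕ))| ≤ Cb := by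
    intro x hx s hs k
    rw [hCbdef]
    apply F_bound hlam hΔ hτ
    constructor
    · have h1 := (hx k).2; have h2 := hs.1; linarith
    · have h1 := (hx k).1; have h2 := hs.2; linarith
  -- product bound with an `ite` selector
  have hprodb : ∀ (P : Fin (m + 1) → Prop) (_ : DecidablePred P),
      ∀ x : Fin (m + 1) → ℝ, (∀ k : Fin (m + 1), T x 0 (k : ℕ) ∈ Set.Icc (-1 : ℝ) (Δ + 2)) →
      ∀ s ∈ Set.Icc (-1 : ℝ) (Δ + 1),
      |g lam A B s * ∏ k : Fin (m + 1),
        if P k then F lam τ (x k) (s - T x 0 (k : ℕ)) else 1| ≤ C := by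
    intro P instP x hx s hs
    rw [abs_mul]
    have h1 : |g lam A B s| ≤ Cg := hgb s hs.2
    have h2 : |∏ k : Fin (m + 1), if P k then F lam τ (x k) (s - T x 0 (k : ℕ)) else 1|
        ≤ Cf ^ (m + 1) := by
      rw [Finset.abs_prod]
      calc (∏ k : Fin (m + 1), |if P k then F lam τ (x k) (s - T x 0 (k : ℕ)) else 1|)
          ≤ ∏ _k : Fin (m + 1), Cf := by
            apply Finset.prod_le_prod (fun k _ => abs_nonneg _)
            intro k _
            by_cases hPk : P k
            · simp only [hPk, if_true]
              exact (hFb x hx s hs k).trans hCbCf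
            · simp only [hPk, if_false, abs_one]
              exact hCf1
        _ = Cf ^ (m + 1) := by
            rw [Finset.prod_const, Finset.card_univ, Fintype.card_fin]
    rw [hCdef]
    exact mul_le_mul h1 h2 (abs_nonneg _) hCg0
  -- measurability of integrands
  have hmeasP : ∀ (P : Fin (m + 1) → Prop) (_ : DecidablePred P), ∀ x : Fin (m + 1) → ℝ,
      Measurable (fun s : ℝ => g lam A B s *
        ∏ k : Fin (m + 1), if P k then F lam τ (x k) (s - T x 0 (k : ℕ)) else 1) := by
    intro P instP x
    apply Measurable.mul
    · exact Continuous.measurable (by unfold g; fun_prop)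
    · apply Finset.measurable_prod
      intro k _
      by_cases hk : P k
      · simp only [hk, if_true]; exact F_measurable
      · simp only [hk, if_false]; exact measurable_const
  -- a.e. continuity of integrands
  have hne_ae : ∀ c : ℝ, ∀ᵐ s : ℝ, s ≠ c := by
    intro c
    have h0 : volume ({c} : Set ℝ) = 0 := Real.volume_singleton
    exact (measure_eq_zero_iff_ae_notMem.mp h0).mono fun s hs => hs
  have hSbad : ∀ᵐ s : ℝ, ∀ k : Fin (m + 1),
      s ≠ T t 0 ((k : ℕ) + 1) ∧ s ≠ T t 0 ((k : ℕ) + 1) - τ := by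
    rw [ae_all_iff]
    exact fun k => (hne_ae _).and (hne_ae _)
  have hcontP : ∀ (P : Fin (m + 1) → Prop) (_ : DecidablePred P), ∀ᵐ s : ℝ,
      ContinuousAt (fun x : Fin (m + 1) → ℝ => g lam A B s *
        ∏ k : Fin (m + 1), if P k then F lam τ (x k) (s - T x 0 (k : ℕ)) else 1) t := by
    intro P instP
    filter_upwards [hSbad] with s hs
    apply ContinuousAt.mul continuousAt_const
    apply tendsto_finset_prod
    intro k _
    by_cases hk : P k
    · simp only [hk, if_true]
      have hsucc0 : T t 0 ((k : ℕ) + 1) = T t 0 (k : ℕ) + t k := by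
        simpa using T_succ t k.isLt (Nat.zero_le _)
      refine hFcomp s 0 k ?_ ?_
      · intro h
        exact (hs k).1 (by rw [hsucc0, h]; ring)
      · intro h
        exact (hs k).2 (by rw [hsucc0, h]; ring)
    · simp only [hk, if_false]
      exact continuousAt_const
  -- continuity of each Ilow
  have hIlowCont : ∀ i : ℕ, i < m → ContinuousAt (Ilow lam Δ τ A B (m := m) i) t := by
    intro i him
    unfold Ilow
    apply ContinuousAt.mul
    · apply tendsto_finset_prod
      intro k _
      by_cases hk : i + 1 ≤ (k : ℕ)
      · simp only [hk, if_true]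
        obtain ⟨h1, h2⟩ := hkey (i + 1) him k hk
        exact hFcomp Δ (i + 1) k h1 h2
      · simp only [hk, if_false]
        exact continuousAt_const
    · refine key (C := C) (L := -1) (U := Δ + 1)
        (f := fun x s => g lam A B s *
          ∏ k : Fin (m + 1), if (k : ℕ) ≤ i then F lam τ (x k) (s - T x 0 (k : ℕ)) else 1)
        (a := fun x => T x 0 i) (b := fun x => T x 0 (i + 1))
        (fun x => hmeasP _ _ x) ?_ (continuous_T 0 i).continuousAt
        (continuous_T 0 (i + 1)).continuousAt ?_ ?_ (hcontP _ _)
      · filter_upwards [hVev] with x hx s hs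
        exact hprodb _ _ x hx s hs
      · exact ⟨by linarith [hT0nn 0 i], by have := hTlt 0 i him.le; linarith⟩
      · exact ⟨by linarith [hT0nn 0 (i + 1)], by have := hTlt 0 (i + 1) him; linarith⟩
  -- continuity of Itop
  have hItopCont : ContinuousAt (Itop lam Δ τ A B (m := m)) t := by
    unfold Itop
    apply ContinuousAt.add
    · have hrw : ∀ (x : Fin (m + 1) → ℝ) (s : ℝ),
          (∏ k : Fin (m + 1), F lam τ (x k) (s - T x 0 (k : ℕ)))
          = ∏ k : Fin (m + 1), if (fun _ : Fin (m + 1) => True) k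
              then F lam τ (x k) (s - T x 0 (k : ℕ)) else 1 := by
        intro x s
        simp
      have := key (C := C) (L := -1) (U := Δ + 1)
        (f := fun x s => g lam A B s *
          ∏ k : Fin (m + 1), F lam τ (x k) (s - T x 0 (k : ℕ)))
        (a := fun x => T x 0 m) (b := fun _ => Δ)
        (x₀ := t) ?_ ?_ (continuous_T 0 m).continuousAt continuousAt_const ?_ ?_ ?_
      · exact this
      · intro x
        have := hmeasP (fun _ => True) (fun _ => inferInstance) x
        simpa using this
      · filter_upwards [hVev] with x hx s hs
        have := hprodb (fun _ => True) (fun _ => inferInstance) x hx s hs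
        simpa using this
      · exact ⟨by linarith [hT0nn 0 m], by linarith⟩
      · exact ⟨by linarith, by linarith⟩
      · have := hcontP (fun _ => True) (fun _ => inferInstance)
        filter_upwards [this] with s hs
        have hrw2 : (fun x : Fin (m + 1) → ℝ => g lam A B s *
            ∏ k : Fin (m + 1), F lam τ (x k) (s - T x 0 (k : ℕ)))
            = fun x => g lam A B s * ∏ k : Fin (m + 1),
              if True then F lam τ (x k) (s - T x 0 (k : ℕ)) else 1 := by
          funext x; simp
        rw [hrw2]
        exact hs
    · apply ContinuousAt.mul continuousAt_const
      apply tendsto_finset_prod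
      intro k _
      obtain ⟨h1, h2⟩ := hkey 0 (Nat.zero_le m) k (Nat.zero_le _)
      exact hFcomp Δ 0 k h1 h2
  unfold J
  exact (tendsto_finset_sum _ fun i hi =>
    hIlowCont i (Finset.mem_range.mp hi)).add hItopCont
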